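/- For all non-negative integers n and m, the function t ↦ H_{n,m}(t) is convex on the interval [-n, n]. -/

import Mathlib

open MeasureTheory Filter

/-- `Ib n m = Σ_{z=0}^{n} ((1 + (-1)^{n-z}) / 2^m) · m!/(z!(m-z)!)`, empty sum for `n < 0`. -/
noncomputable def Ib (n : ℤ) (m : ℕ) : ℝ :=
  ∑ z ∈ Finset.range (n + 1).toNat,
    ((1 + (-1 : ℝ) ^ (n.toNat - z)) / 2 ^ m) * (m.choose z)

/-- The function `G(x, y, m)` of the paper. -/
noncomputable def Gfun (x y m : ℕ) : ℝ :=
  if x = 0 ∧ y = 0 then 1 else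
    ∑ n ∈ Finset.range (m / (2 * (x + y)) + 1),
      (2 * Ib (((m : ℤ) - x) / 2 - ((x : ℤ) + y) * n) (2 * (((m : ℤ) - x) / 2) + x + 2).toNat
       - 2 * Ib (((m : ℤ) - x) / 2 - y - ((x : ℤ) + y) * n) (2 * (((m : ℤ) - x) / 2) + x + 2).toNat
       + 2 * Ib (((m : ℤ) - y) / 2 - ((x : ℤ) + y) * n) (2 * (((m : ℤ) - y) / 2) + y + 2).toNat
       - 2 * Ib (((m : ℤ) - y) / 2 - x - ((x : ℤ) + y) * n) (2 * (((m : ℤ) - y) / 2) + y + 2).toNat)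

/-- The piecewise-linear interpolation `H_{n,m}(t)` of the paper. -/
noncomputable def Hfun (n m : ℕ) (t : ℝ) : ℝ :=
  if (n : ℝ) ≤ |t| then 1 else
    (1 - ((n : ℝ) + t) / 2 + (⌊((n : ℝ) + t) / 2⌋ : ℤ))
        * Gfun (⌊((n : ℝ) + t) / 2⌋).toNat (n - (⌊((n : ℝ) + t) / 2⌋).toNat) m
    + (((n : ℝ) + t) / 2 - (⌊((n : ℝ) + t) / 2⌋ : ℤ))
        * Gfun ((⌊((n : ℝ) + t) / 2⌋).toNat + 1) (n - (⌊((n : ℝ) + t) / 2⌋).toNat - 1) m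

set_option maxHeartbeats 1000000

lemma Ib_neg {n : ℤ} (hn : n < 0) (M : ℕ) : Ib n M = 0 := by
  unfold Ib
  have h : (n+1).toNat = 0 := by omega
  simp [h]

lemma Ib_nonneg (n : ℤ) (M : ℕ) : 0 ≤ Ib n M := by
  unfold Ib
  apply Finset.sum_nonneg
  intro z _
  apply mul_nonneg _ (by positivity)
  apply div_nonneg _ (by positivity)
  rcases Nat.even_or_odd (n.toNat - z) with h | h
  · rw [h.neg_one_pow]; norm_num
  · rw [h.neg_one_pow]; norm_num

noncomputable def Sfun (k M : ℕ) : ℝ :=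
  ∑ z ∈ Finset.range (k+1), (1 + (-1:ℝ)^(k - z)) * (M.choose z)

lemma Ib_eq_Sfun {n : ℤ} (hn : 0 ≤ n) (M : ℕ) : Ib n M = Sfun n.toNat M / 2^M := by
  unfold Ib Sfun
  have h : (n+1).toNat = n.toNat + 1 := by omega
  rw [h, Finset.sum_div]
  exact Finset.sum_congr rfl fun z _ => by ring

lemma Sfun_zero (M : ℕ) : Sfun 0 M = 2 := by norm_num [Sfun]

lemma Sfun_succ (k M : ℕ) : Sfun (k+1) (M+1) = Sfun (k+1) M + Sfun k M := by
  unfold Sfun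
  rw [Finset.sum_range_succ' (fun z => (1 + (-1:ℝ)^(k+1 - z)) * ((M+1).choose z))]
  rw [Finset.sum_range_succ' (fun z => (1 + (-1:ℝ)^(k+1 - z)) * (M.choose z))]
  have hps : ∀ z, ((M+1).choose (z+1) : ℝ) = M.choose z + M.choose (z+1) := by
    intro z; rw [Nat.choose_succ_succ]; push_cast; ring
  have : ∑ z ∈ Finset.range (k+1), (1 + (-1:ℝ)^(k+1 - (z+1))) * ((M+1).choose (z+1))
      = (∑ z ∈ Finset.range (k+1), (1 + (-1:ℝ)^(k - z)) * (M.choose z))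
      + ∑ z ∈ Finset.range (k+1), (1 + (-1:ℝ)^(k+1 - (z+1))) * (M.choose (z+1)) := by
    rw [← Finset.sum_add_distrib]
    apply Finset.sum_congr rfl
    intro z hz
    have : k + 1 - (z+1) = k - z := by omega
    rw [this, hps z]
    ring
  rw [this]
  simp [Nat.choose_zero_right]
  ring

lemma Ib_pascal (n : ℤ) (M : ℕ) : 2 * Ib n (M+1) = Ib n M + Ib (n-1) M := by
  rcases lt_trichotomy n 0 with h | h | h
  · rw [Ib_neg h, Ib_neg h, Ib_neg (by omega)]; ring
  · subst h
    rw [Ib_eq_Sfun le_rfl, Ib_eq_Sfun le_rfl, Ib_neg (by omega)]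
    norm_num [Sfun_zero]
    ring
  · have h1 : (0:ℤ) ≤ n := le_of_lt h
    have h2 : (0:ℤ) ≤ n - 1 := by omega
    obtain ⟨k, hk⟩ : ∃ k : ℕ, n.toNat = k + 1 := ⟨n.toNat - 1, by omega⟩
    have hk2 : (n-1).toNat = k := by omega
    rw [Ib_eq_Sfun h1, Ib_eq_Sfun h1, Ib_eq_Sfun h2, hk, hk2, Sfun_succ]
    field_simp
    ring

lemma Sfun_half (a : ℕ) : Sfun a (2*a+2) = 2^(2*a+1) := by
  set N := 2*a+2 with hN
  set f : ℕ → ℝ := fun z => (1 + (-1:ℝ)^(a + z)) * (N.choose z) with hf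
  have step1 : Sfun a N = ∑ z ∈ Finset.range (a+1), f z := by
    unfold Sfun
    apply Finset.sum_congr rfl
    intro z hz
    have hz' : z ≤ a := by simpa [Nat.lt_succ_iff] using hz
    have : (-1:ℝ)^(a - z) = (-1:ℝ)^(a + z) := by
      have h2 : a + z = (a - z) + 2*z := by omega
      rw [h2, pow_add, pow_mul]
      norm_num
    rw [hf]; simp only [this]
  have step2 : ∑ z ∈ Finset.range (N+1), f z = 2^N := by
    have e1 : ∑ z ∈ Finset.range (N+1), f z
        = (∑ z ∈ Finset.range (N+1), (N.choose z : ℝ))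
          + (-1:ℝ)^a * ∑ z ∈ Finset.range (N+1), (-1:ℝ)^z * (N.choose z) := by
      rw [Finset.mul_sum, ← Finset.sum_add_distrib]
      apply Finset.sum_congr rfl
      intro z _
      rw [hf]; simp only []
      rw [pow_add]; ring
    rw [e1]
    have e2 : ∑ z ∈ Finset.range (N+1), (N.choose z : ℝ) = 2^N := by
      rw [← Nat.cast_sum, Nat.sum_range_choose]; push_cast; ring
    have e3 : ∑ z ∈ Finset.range (N+1), (-1:ℝ)^z * (N.choose z) = 0 := by
      have := Int.alternating_sum_range_choose (n := N)
      have hN0 : N ≠ 0 := by omega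
      rw [if_neg hN0] at this
      have := congrArg (fun x : ℤ => (x : ℝ)) this
      push_cast at this
      convert this using 2
    rw [e2, e3]; ring
  have hf_a1 : f (a+1) = 0 := by
    rw [hf]; simp only []
    have : (-1:ℝ)^(a + (a+1)) = -1 := Odd.neg_one_pow ⟨a, by omega⟩
    rw [this]; ring
  have step5 : ∑ i ∈ Finset.range (a+1), f (a+2+i) = ∑ z ∈ Finset.range (a+1), f z := by
    rw [← Finset.sum_range_reflect (fun i => f (a+2+i)) (a+1)]
    apply Finset.sum_congr rfl
    intro j hj
    have hj' : j ≤ a := by simpa [Nat.lt_succ_iff] using hj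
    have h1 : a + 2 + (a + 1 - 1 - j) = N - j := by omega
    rw [h1]
    rw [hf]; simp only []
    have hcs : (N.choose (N - j) : ℝ) = N.choose j := by
      rw [Nat.choose_symm (by omega)]
    have hsg : (-1:ℝ)^(a + (N - j)) = (-1:ℝ)^(a + j) := by
      have h2 : a + (N - j) = (a + j) + 2*(a+1-j) := by omega
      rw [h2, pow_add, pow_mul]; norm_num
    rw [hcs, hsg]
  have split : ∑ z ∈ Finset.range (N+1), f z
      = (∑ z ∈ Finset.range (a+2), f z) + ∑ i ∈ Finset.range (a+1), f (a+2+i) := by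
    have : N + 1 = (a+2) + (a+1) := by omega
    rw [this, Finset.sum_range_add]
  have split2 : ∑ z ∈ Finset.range (a+2), f z = (∑ z ∈ Finset.range (a+1), f z) + f (a+1) :=
    Finset.sum_range_succ f (a+1)
  have key : (2:ℝ)^N = 2 * ∑ z ∈ Finset.range (a+1), f z := by
    rw [← step2, split, split2, hf_a1, step5]; ring
  rw [step1]
  have : (2:ℝ)^N = 2 * 2^(2*a+1) := by rw [hN]; ring
  linarith [key, this]

lemma Ib_half (a : ℕ) : Ib (a : ℤ) (2*a+2) = 1/2 := by
  rw [Ib_eq_Sfun (Int.natCast_nonneg a)]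
  rw [Int.toNat_natCast, Sfun_half]
  rw [show 2*a+2 = (2*a+1)+1 by ring, pow_succ]
  field_simp
  ring

noncomputable def Gterm (x y m n : ℕ) : ℝ :=
      2 * Ib (((m : ℤ) - x) / 2 - ((x : ℤ) + y) * n) (2 * (((m : ℤ) - x) / 2) + x + 2).toNat
       - 2 * Ib (((m : ℤ) - x) / 2 - y - ((x : ℤ) + y) * n) (2 * (((m : ℤ) - x) / 2) + x + 2).toNat
       + 2 * Ib (((m : ℤ) - y) / 2 - ((x : ℤ) + y) * n) (2 * (((m : ℤ) - y) / 2) + y + 2).toNat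
       - 2 * Ib (((m : ℤ) - y) / 2 - x - ((x : ℤ) + y) * n) (2 * (((m : ℤ) - y) / 2) + y + 2).toNat

lemma Gfun_def (x y m : ℕ) (h : ¬(x = 0 ∧ y = 0)) :
    Gfun x y m = ∑ n ∈ Finset.range (m / (2 * (x + y)) + 1), Gterm x y m n := by
  rw [Gfun, if_neg h]; rfl

lemma Gterm_vanish (x y m n : ℕ) (hn : m / (2 * (x + y)) + 1 ≤ n) (hxy : 0 < x + y) :
    Gterm x y m n = 0 := by
  have hm : m < n * (2 * (x + y)) := (Nat.div_lt_iff_lt_mul (by omega)).1 (by omega)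
  have hmz : (m : ℤ) < 2 * (((x:ℤ) + y) * n) := by
    have h0 : (m:ℤ) < (n : ℤ) * (2 * ((x:ℤ) + y)) := by exact_mod_cast hm
    have h0' : (n : ℤ) * (2 * ((x:ℤ) + y)) = 2 * (((x:ℤ) + y) * n) := by ring
    omega
  have h1 : ((m : ℤ) - x) / 2 - ((x : ℤ) + y) * n < 0 := by omega
  have h2 : ((m : ℤ) - x) / 2 - y - ((x : ℤ) + y) * n < 0 := by omega
  have h3 : ((m : ℤ) - y) / 2 - ((x : ℤ) + y) * n < 0 := by omega
  have h4 : ((m : ℤ) - y) / 2 - x - ((x : ℤ) + y) * n < 0 := by omega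
  unfold Gterm
  rw [Ib_neg h1, Ib_neg h2, Ib_neg h3, Ib_neg h4]
  ring

lemma Gfun_eq_sum (x y m K : ℕ) (h : ¬(x = 0 ∧ y = 0)) (hK : m / (2 * (x + y)) + 1 ≤ K) :
    Gfun x y m = ∑ n ∈ Finset.range K, Gterm x y m n := by
  rw [Gfun_def x y m h]
  apply Finset.sum_subset (Finset.range_subset_range.2 hK)
  intro n hn hnot
  simp only [Finset.mem_range, not_lt] at hnot
  exact Gterm_vanish x y m n hnot (by omega)

lemma pair_pascal (c d : ℤ) (M : ℕ) :
    2 * (2 * Ib c (M+1) - 2 * Ib d (M+1))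
      = (2 * Ib c M - 2 * Ib (d-1) M) + (2 * Ib (c-1) M - 2 * Ib d M) := by
  have h1 := Ib_pascal c M
  have h2 := Ib_pascal d M
  linarith

lemma Gterm_rec (x y m n : ℕ) :
    2 * Gterm (x+1) (y+1) (m+1) n = Gterm x (y+2) m n + Gterm (x+2) y m n := by
  unfold Gterm
  push_cast
  set a := ((m:ℤ) - x) / 2 with ha
  set b := ((m:ℤ) - y) / 2 with hb
  have e1 : ((m:ℤ) + 1 - ((x:ℤ) + 1)) / 2 = a := by rw [ha]; congr 1; ring
  have e2 : ((m:ℤ) - ((x:ℤ) + 2)) / 2 = a - 1 := by rw [ha]; omega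
  have e3 : ((m:ℤ) + 1 - ((y:ℤ) + 1)) / 2 = b := by rw [hb]; congr 1; ring
  have e4 : ((m:ℤ) - ((y:ℤ) + 2)) / 2 = b - 1 := by rw [hb]; omega
  rw [e1, e2, e3, e4]
  have ha2 : 2 * a ≥ (m:ℤ) - x - 1 := by omega
  have hb2 : 2 * b ≥ (m:ℤ) - y - 1 := by omega
  have hMx : (2 * a + ((x:ℤ) + 1) + 2).toNat = (2 * a + (x:ℤ) + 2).toNat + 1 := by omega
  have hMx2 : (2 * (a - 1) + ((x:ℤ) + 2) + 2).toNat = (2 * a + (x:ℤ) + 2).toNat := by omega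
  have hMy : (2 * b + ((y:ℤ) + 1) + 2).toNat = (2 * b + (y:ℤ) + 2).toNat + 1 := by omega
  have hMy2 : (2 * (b - 1) + ((y:ℤ) + 2) + 2).toNat = (2 * b + (y:ℤ) + 2).toNat := by omega
  rw [hMx, hMx2, hMy, hMy2]
  set Mx := (2 * a + (x:ℤ) + 2).toNat
  set My := (2 * b + (y:ℤ) + 2).toNat
  set W := (x:ℤ) + y + 2 with hW
  have w1 : (x:ℤ) + 1 + ((y:ℤ) + 1) = W := by rw [hW]; ring
  have w2 : (x:ℤ) + ((y:ℤ) + 2) = W := by rw [hW]; ring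
  have w3 : (x:ℤ) + 2 + (y:ℤ) = W := by rw [hW]; ring
  rw [w1, w2, w3]
  have p1 := pair_pascal (a - W * n) (a - ((y:ℤ)+1) - W * n) Mx
  have p2 := pair_pascal (b - W * n) (b - ((x:ℤ)+1) - W * n) My
  have q1 : a - ((y:ℤ)+1) - W*n - 1 = a - ((y:ℤ)+2) - W*n := by ring
  have q2 : a - W*n - 1 = a - 1 - W*n := by ring
  have q3 : a - 1 - ((y:ℤ)) - W*n = a - ((y:ℤ)+1) - W*n := by ring
  have q4 : b - ((x:ℤ)+1) - W*n - 1 = b - ((x:ℤ)+2) - W*n := by ring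
  have q5 : b - W*n - 1 = b - 1 - W*n := by ring
  have q6 : b - 1 - ((x:ℤ)) - W*n = b - ((x:ℤ)+1) - W*n := by ring
  rw [q1, q2] at p1
  rw [q4, q5] at p2
  rw [q3, q6]
  linarith

lemma Gfun_rec (x y m : ℕ) :
    2 * Gfun (x+1) (y+1) (m+1) = Gfun x (y+2) m + Gfun (x+2) y m := by
  rw [Gfun_eq_sum (x+1) (y+1) (m+1) (m+2) (by omega) (by
        have := Nat.div_le_self (m+1) (2*((x+1)+(y+1))); omega),
      Gfun_eq_sum x (y+2) m (m+2) (by omega) (by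
        have := Nat.div_le_self m (2*(x+(y+2))); omega),
      Gfun_eq_sum (x+2) y m (m+2) (by omega) (by
        have := Nat.div_le_self m (2*((x+2)+y)); omega),
      Finset.mul_sum, ← Finset.sum_add_distrib]
  exact Finset.sum_congr rfl fun n _ => Gterm_rec x y m n

lemma Gfun_base (x y : ℕ) : Gfun (x+1) (y+1) 0 = 0 := by
  rw [Gfun_def _ _ _ (by omega)]
  have h0 : (0:ℕ) / (2 * ((x+1) + (y+1))) = 0 := Nat.zero_div _
  rw [h0, Finset.sum_range_one]
  unfold Gterm
  have h1 : (((0:ℕ) : ℤ) - ((x+1:ℕ):ℤ)) / 2 - (((x+1:ℕ):ℤ) + ((y+1:ℕ):ℤ)) * ((0:ℕ):ℤ) < 0 := by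
    push_cast; omega
  have h2 : (((0:ℕ) : ℤ) - ((x+1:ℕ):ℤ)) / 2 - ((y+1:ℕ):ℤ) - (((x+1:ℕ):ℤ) + ((y+1:ℕ):ℤ)) * ((0:ℕ):ℤ) < 0 := by
    push_cast; omega
  have h3 : (((0:ℕ) : ℤ) - ((y+1:ℕ):ℤ)) / 2 - (((x+1:ℕ):ℤ) + ((y+1:ℕ):ℤ)) * ((0:ℕ):ℤ) < 0 := by
    push_cast; omega
  have h4 : (((0:ℕ) : ℤ) - ((y+1:ℕ):ℤ)) / 2 - ((x+1:ℕ):ℤ) - (((x+1:ℕ):ℤ) + ((y+1:ℕ):ℤ)) * ((0:ℕ):ℤ) < 0 := by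
    push_cast; omega
  rw [Ib_neg h1, Ib_neg h2, Ib_neg h3, Ib_neg h4]
  ring

lemma Gfun_zero_left (y m : ℕ) : Gfun 0 y m = 1 := by
  rcases y with _ | y
  · rw [Gfun, if_pos ⟨rfl, rfl⟩]
  · rw [Gfun_def 0 (y+1) m (by omega)]
    set Y : ℕ := y + 1 with hY
    set M : ℕ := (2 * ((m:ℤ) / 2) + 2).toNat with hM
    set f : ℕ → ℝ := fun k => 2 * Ib ((m:ℤ) / 2 - (Y:ℤ) * k) M with hfdef
    have key : ∀ n : ℕ, Gterm 0 Y m n = f n - f (n+1) := by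
      intro n
      unfold Gterm
      have c0 : ((0:ℕ):ℤ) = 0 := rfl
      rw [c0]
      rw [show (m:ℤ) - 0 = (m:ℤ) by ring, show (0:ℤ) + (Y:ℤ) = (Y:ℤ) by ring]
      rw [show ((m:ℤ) - (Y:ℤ))/2 - 0 - (Y:ℤ)*(n:ℤ) = ((m:ℤ) - (Y:ℤ))/2 - (Y:ℤ)*(n:ℤ) by ring]
      rw [show (2 * ((m:ℤ)/2) + 0 + 2).toNat = M by rw [hM]; omega]
      rw [show (m:ℤ)/2 - (Y:ℤ) - (Y:ℤ)*(n:ℤ) = (m:ℤ)/2 - (Y:ℤ)*((n:ℤ)+1) by ring]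
      rw [hfdef]
      simp only []
      push_cast
      ring
    rw [Finset.sum_congr rfl fun n _ => key n, Finset.sum_range_sub' f]
    set N : ℕ := m / (2 * (0 + Y)) with hN
    have hfN : f (N+1) = 0 := by
      rw [hfdef]; simp only []
      have hm : m < (N+1) * (2 * (0 + Y)) :=
        (Nat.div_lt_iff_lt_mul (show 0 < 2 * (0 + Y) by omega)).1 (by omega)
      have hc1 : ((2*(0+Y):ℕ):ℤ) = 2*(Y:ℤ) := by push_cast; ring
      have hc2 : (((N+1):ℕ):ℤ) = (N:ℤ)+1 := by push_cast; ring
      have h0 : (m:ℤ) < ((N+1:ℕ):ℤ) * ((2*(0+Y):ℕ):ℤ) := by exact_mod_cast hm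
      rw [hc1, hc2] at h0
      have h0' : ((N:ℤ)+1) * (2*(Y:ℤ)) = 2*((Y:ℤ)*((N:ℤ)+1)) := by ring
      have harg : (m:ℤ) / 2 - (Y:ℤ) * ((N+1:ℕ):ℤ) < 0 := by rw [hc2]; omega
      rw [Ib_neg harg]
      ring
    have hf0 : f 0 = 1 := by
      rw [hfdef]; simp only []
      rw [show ((0:ℕ):ℤ) = 0 from rfl, mul_zero, sub_zero]
      have hdiv : (m:ℤ) / 2 = ((m / 2 : ℕ) : ℤ) := by
        omega
      have hMval : M = 2 * (m / 2) + 2 := by rw [hM, hdiv]; omega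
      rw [hdiv, hMval, Ib_half]
      norm_num
    rw [hfN, hf0]
    ring

lemma Gfun_zero_right (x m : ℕ) : Gfun x 0 m = 1 := by
  rcases x with _ | x
  · rw [Gfun, if_pos ⟨rfl, rfl⟩]
  · rw [Gfun_def (x+1) 0 m (by omega)]
    set X : ℕ := x + 1 with hX
    set M : ℕ := (2 * ((m:ℤ) / 2) + 2).toNat with hM
    set f : ℕ → ℝ := fun k => 2 * Ib ((m:ℤ) / 2 - (X:ℤ) * k) M with hfdef
    have key : ∀ n : ℕ, Gterm X 0 m n = f n - f (n+1) := by
      intro n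
      unfold Gterm
      have c0 : ((0:ℕ):ℤ) = 0 := rfl
      rw [c0]
      rw [show (m:ℤ) - 0 = (m:ℤ) by ring, show (X:ℤ) + (0:ℤ) = (X:ℤ) by ring]
      rw [show ((m:ℤ) - (X:ℤ))/2 - 0 - (X:ℤ)*(n:ℤ) = ((m:ℤ) - (X:ℤ))/2 - (X:ℤ)*(n:ℤ) by ring]
      rw [show (2 * ((m:ℤ)/2) + 0 + 2).toNat = M by rw [hM]; omega]
      rw [show (m:ℤ)/2 - (X:ℤ) - (X:ℤ)*(n:ℤ) = (m:ℤ)/2 - (X:ℤ)*((n:ℤ)+1) by ring]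
      rw [hfdef]
      simp only []
      push_cast
      ring
    rw [Finset.sum_congr rfl fun n _ => key n, Finset.sum_range_sub' f]
    set N : ℕ := m / (2 * (X + 0)) with hN
    have hfN : f (N+1) = 0 := by
      rw [hfdef]; simp only []
      have hm : m < (N+1) * (2 * (X + 0)) :=
        (Nat.div_lt_iff_lt_mul (show 0 < 2 * (X + 0) by omega)).1 (by omega)
      have hc1 : ((2*(X+0):ℕ):ℤ) = 2*(X:ℤ) := by push_cast; ring
      have hc2 : (((N+1):ℕ):ℤ) = (N:ℤ)+1 := by push_cast; ring
      have h0 : (m:ℤ) < ((N+1:ℕ):ℤ) * ((2*(X+0):ℕ):ℤ) := by exact_mod_cast hm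
      rw [hc1, hc2] at h0
      have h0' : ((N:ℤ)+1) * (2*(X:ℤ)) = 2*((X:ℤ)*((N:ℤ)+1)) := by ring
      have harg : (m:ℤ) / 2 - (X:ℤ) * ((N+1:ℕ):ℤ) < 0 := by rw [hc2]; omega
      rw [Ib_neg harg]
      ring
    have hf0 : f 0 = 1 := by
      rw [hfdef]; simp only []
      rw [show ((0:ℕ):ℤ) = 0 from rfl, mul_zero, sub_zero]
      have hdiv : (m:ℤ) / 2 = ((m / 2 : ℕ) : ℤ) := by
        omega
      have hMval : M = 2 * (m / 2) + 2 := by rw [hM, hdiv]; omega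
      rw [hdiv, hMval, Ib_half]
      norm_num
    rw [hfN, hf0]
    ring

lemma Gfun_nonneg : ∀ m x y, 0 ≤ Gfun x y m := by
  intro m
  induction m with
  | zero =>
    intro x y
    rcases x with _ | x
    · rw [Gfun_zero_left]; norm_num
    · rcases y with _ | y
      · rw [Gfun_zero_right]; norm_num
      · rw [Gfun_base]
  | succ m ih =>
    intro x y
    rcases x with _ | x
    · rw [Gfun_zero_left]; norm_num
    · rcases y with _ | y
      · rw [Gfun_zero_right]; norm_num
      · have h := Gfun_rec x y m
        have h1 := ih x (y+2)
        have h2 := ih (x+2) y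
        linarith

lemma Gfun_le_one : ∀ m x y, Gfun x y m ≤ 1 := by
  intro m
  induction m with
  | zero =>
    intro x y
    rcases x with _ | x
    · rw [Gfun_zero_left]
    · rcases y with _ | y
      · rw [Gfun_zero_right]
      · rw [Gfun_base]; norm_num
  | succ m ih =>
    intro x y
    rcases x with _ | x
    · rw [Gfun_zero_left]
    · rcases y with _ | y
      · rw [Gfun_zero_right]
      · have h := Gfun_rec x y m
        have h1 := ih x (y+2)
        have h2 := ih (x+2) y
        linarith

lemma Gfun_mono : ∀ m x y, Gfun x y m ≤ Gfun x y (m+1) := by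
  intro m
  induction m with
  | zero =>
    intro x y
    rcases x with _ | x
    · rw [Gfun_zero_left, Gfun_zero_left]
    · rcases y with _ | y
      · rw [Gfun_zero_right, Gfun_zero_right]
      · rw [Gfun_base]; exact Gfun_nonneg 1 (x+1) (y+1)
  | succ m ih =>
    intro x y
    rcases x with _ | x
    · rw [Gfun_zero_left, Gfun_zero_left]
    · rcases y with _ | y
      · rw [Gfun_zero_right, Gfun_zero_right]
      · have h := Gfun_rec x y m
        have h' := Gfun_rec x y (m+1)
        have h1 := ih x (y+2)
        have h2 := ih (x+2) y
        linarith

lemma Gfun_cvx : ∀ m x y, 2 * Gfun (x+1) (y+1) m ≤ Gfun x (y+2) m + Gfun (x+2) y m := by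
  intro m
  induction m with
  | zero =>
    intro x y
    rw [Gfun_base]
    have h1 := Gfun_nonneg 0 x (y+2)
    have h2 := Gfun_nonneg 0 (x+2) y
    linarith
  | succ m ih =>
    intro x y
    rcases x with _ | x
    · rcases y with _ | y
      · -- x = 0, y = 0
        rw [Gfun_zero_left, Gfun_zero_right]
        have := Gfun_le_one (m+1) 1 1
        linarith
      · -- x = 0, y ≥ 1
        rw [Gfun_zero_left]
        have h := Gfun_rec 0 (y+1) m
        rw [Gfun_zero_left] at h
        have h2 := Gfun_mono m 2 (y+1)
        linarith
    · rcases y with _ | y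
      · -- y = 0, x ≥ 1
        rw [Gfun_zero_right]
        have h := Gfun_rec (x+1) 0 m
        rw [Gfun_zero_right] at h
        have h2 := Gfun_mono m (x+1) 2
        linarith
      · -- x, y ≥ 1
        have h0 := Gfun_rec (x+1) (y+1) m
        have h1 := Gfun_rec x (y+2) m
        have h2 := Gfun_rec (x+2) y m
        have i1 := ih x (y+2)
        have i2 := ih (x+2) y
        linarith

section Analytic
variable (n m : ℕ)

noncomputable def gseq (z : ℕ) : ℝ := Gfun z (n - z) m

noncomputable def linef (j : ℕ) (t : ℝ) : ℝ :=
  gseq n m j + (gseq n m (j+1) - gseq n m j) * (((n:ℝ) + t)/2 - (j:ℝ))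

lemma slope_mono {k : ℕ} (hk : k + 2 ≤ n) :
    gseq n m (k+1) - gseq n m k ≤ gseq n m (k+2) - gseq n m (k+1) := by
  have h := Gfun_cvx m k (n - k - 2)
  have e1 : n - k - 2 + 1 = n - (k+1) := by omega
  have e2 : n - k - 2 + 2 = n - k := by omega
  have e3 : n - k - 2 = n - (k+2) := by omega
  rw [e1, e2, e3] at h
  unfold gseq
  linarith

lemma step_le {k : ℕ} {t : ℝ} (hk : k + 2 ≤ n) (ht : (k:ℝ) + 1 ≤ ((n:ℝ)+t)/2) :
    linef n m k t ≤ linef n m (k+1) t := by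
  have hs := slope_mono n m hk
  have key : linef n m (k+1) t - linef n m k t
      = ((gseq n m (k+2) - gseq n m (k+1)) - (gseq n m (k+1) - gseq n m k))
        * ((((n:ℝ)+t)/2) - ((k:ℝ)+1)) := by
    unfold linef
    push_cast
    ring
  nlinarith [mul_nonneg (sub_nonneg.2 hs) (sub_nonneg.2 ht)]

lemma step_ge {k : ℕ} {t : ℝ} (hk : k + 2 ≤ n) (ht : ((n:ℝ)+t)/2 ≤ (k:ℝ) + 1) :
    linef n m (k+1) t ≤ linef n m k t := by
  have hs := slope_mono n m hk
  have key : linef n m (k+1) t - linef n m k t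
      = ((gseq n m (k+2) - gseq n m (k+1)) - (gseq n m (k+1) - gseq n m k))
        * ((((n:ℝ)+t)/2) - ((k:ℝ)+1)) := by
    unfold linef
    push_cast
    ring
  nlinarith [mul_nonneg (sub_nonneg.2 hs) (sub_nonneg.2 ht)]

lemma chain_le {t : ℝ} : ∀ d i, i + d + 1 ≤ n → ((i+d:ℕ):ℝ) ≤ ((n:ℝ)+t)/2 →
    linef n m i t ≤ linef n m (i+d) t := by
  intro d
  induction d with
  | zero => intro i _ _; exact le_refl _
  | succ d ih =>
    intro i hb hu
    have hcast : ((i+d:ℕ):ℝ) + 1 = ((i+(d+1):ℕ):ℝ) := by push_cast; ring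
    have h1 : linef n m i t ≤ linef n m (i+d) t := by
      apply ih i (by omega)
      calc ((i+d:ℕ):ℝ) ≤ ((i+d:ℕ):ℝ) + 1 := by linarith
        _ = ((i+(d+1):ℕ):ℝ) := hcast
        _ ≤ _ := hu
    have h2 : linef n m (i+d) t ≤ linef n m (i+d+1) t := by
      apply step_le n m (by omega)
      rw [hcast]
      exact hu
    have : i + (d+1) = (i+d)+1 := by omega
    rw [this]
    linarith

lemma chain_ge {t : ℝ} : ∀ d i, i + d + 1 ≤ n → ((n:ℝ)+t)/2 ≤ (i:ℝ) + 1 →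
    linef n m (i+d) t ≤ linef n m i t := by
  intro d
  induction d with
  | zero => intro i _ _; exact le_refl _
  | succ d ih =>
    intro i hb hu
    have h2 : linef n m (i+d+1) t ≤ linef n m (i+d) t := by
      apply step_ge n m (by omega)
      have : (i:ℝ) + 1 ≤ ((i+d:ℕ):ℝ) + 1 := by
        have : (i:ℝ) ≤ ((i+d:ℕ):ℝ) := by push_cast; linarith [Nat.cast_nonneg (α := ℝ) d]
        linarith
      linarith
    have h1 : linef n m (i+d) t ≤ linef n m i t := ih i (by omega) hu
    have : i + (d+1) = (i+d)+1 := by omega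
    rw [this]
    linarith

lemma support_line (hn : 1 ≤ n) {t : ℝ} (ht : t ∈ Set.Icc (-(n:ℝ)) (n:ℝ)) :
    ∃ j, j + 1 ≤ n ∧ Hfun n m t = linef n m j t ∧
      ∀ i, i + 1 ≤ n → linef n m i t ≤ linef n m j t := by
  obtain ⟨htl, htr⟩ := ht
  by_cases h : (n : ℝ) ≤ |t|
  · have habs : |t| = n := le_antisymm (abs_le.2 ⟨htl, htr⟩) h
    have hH : Hfun n m t = 1 := by rw [Hfun, if_pos h]
    rcases (abs_eq (by positivity : (0:ℝ) ≤ (n:ℝ))).1 habs with h' | h'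
    · -- t = n
      refine ⟨n - 1, by omega, ?_, ?_⟩
      · have hc : ((n-1:ℕ):ℝ) = (n:ℝ) - 1 := by
          have h2 : ((n-1:ℕ):ℝ) + 1 = ((n-1+1:ℕ):ℝ) := by push_cast; ring
          have e : n - 1 + 1 = n := by omega
          rw [e] at h2
          linarith
        have hidx : n - 1 + 1 = n := by omega
        have hg : gseq n m n = 1 := by
          unfold gseq
          rw [Nat.sub_self, Gfun_zero_right]
        unfold linef
        rw [hH, hidx, hc, h', hg]
        ring
      · intro i hi
        have hcd := chain_le n m (t := t) (n - 1 - i) i (by omega) (by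
          rw [show i + (n - 1 - i) = n - 1 by omega, h']
          have : ((n-1:ℕ):ℝ) ≤ (n:ℝ) := by exact_mod_cast Nat.sub_le n 1
          linarith)
        rwa [show i + (n - 1 - i) = n - 1 by omega] at hcd
    · -- t = -n
      refine ⟨0, by omega, ?_, ?_⟩
      · have hg : gseq n m 0 = 1 := by
          unfold gseq
          rw [Nat.sub_zero, Gfun_zero_left]
        unfold linef
        rw [hH, h', hg]
        push_cast
        ring
      · intro i hi
        have hcd := chain_ge n m (t := t) i 0 (by omega) (by
          rw [h']; push_cast; linarith)
        simpa using hcd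
  · -- interior
    push_neg at h
    obtain ⟨hl, hr⟩ := abs_lt.1 h
    set u : ℝ := ((n:ℝ) + t)/2 with hu
    have hu0 : 0 < u := by rw [hu]; linarith
    have hun : u < n := by rw [hu]; linarith
    set z : ℤ := ⌊u⌋ with hz
    have hz0 : 0 ≤ z := Int.floor_nonneg.2 hu0.le
    have hzn : z < (n:ℤ) := Int.floor_lt.2 (by exact_mod_cast hun)
    set j : ℕ := z.toNat with hj
    have hjz : (j:ℤ) = z := Int.toNat_of_nonneg hz0
    have hjr : (j:ℝ) = (z:ℝ) := by exact_mod_cast congrArg (fun w : ℤ => (w:ℝ)) hjz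
    have hjn : j + 1 ≤ n := by omega
    have hfl : (j:ℝ) ≤ u := by rw [hjr, hz]; exact Int.floor_le u
    have hfu : u ≤ (j:ℝ) + 1 := by rw [hjr, hz]; exact (Int.lt_floor_add_one u).le
    refine ⟨j, hjn, ?_, ?_⟩
    · rw [Hfun, if_neg (not_le.2 h)]
      rw [← hu, ← hz, ← hj]
      rw [← hjr]
      rw [show n - j - 1 = n - (j+1) by omega]
      unfold linef gseq
      rw [← hu]
      ring
    · intro i hi
      rcases le_or_gt i j with hij | hij
      · have hcd := chain_le n m (t := t) (j - i) i (by omega) (by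
          rw [show i + (j - i) = j by omega]; exact hfl)
        rwa [show i + (j - i) = j by omega] at hcd
      · have hcd := chain_ge n m (t := t) (i - j) j (by omega) hfu
        rwa [show j + (i - j) = i by omega] at hcd

end Analytic


theorem H_convexOn (n m : ℕ) :
    ConvexOn ℝ (Set.Icc (-(n : ℝ)) (n : ℝ)) (Hfun n m) := by
  rcases Nat.eq_zero_or_pos n with h0 | hn
  · subst h0
    have hconst : Hfun 0 m = fun _ => (1:ℝ) := by
      funext t
      rw [Hfun, if_pos (by simpa using abs_nonneg t)]
    rw [hconst]
    exact convexOn_const 1 (convex_Icc _ _)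
  · refine ⟨convex_Icc _ _, ?_⟩
    intro p hp q hq a b ha hb hab
    have hrmem : a • p + b • q ∈ Set.Icc (-(n:ℝ)) (n:ℝ) :=
      (convex_Icc _ _) hp hq ha hb hab
    obtain ⟨j, hj, hEr, _⟩ := support_line n m hn hrmem
    obtain ⟨jp, hjp, hEp, hmp⟩ := support_line n m hn hp
    obtain ⟨jq, hjq, hEq2, hmq⟩ := support_line n m hn hq
    have h1 : linef n m j p ≤ Hfun n m p := hEp ▸ hmp j hj
    have h2 : linef n m j q ≤ Hfun n m q := hEq2 ▸ hmq j hj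
    have haff : linef n m j (a • p + b • q) = a * linef n m j p + b * linef n m j q := by
      simp only [smul_eq_mul]
      have hb' : b = 1 - a := by linarith
      subst hb'
      unfold linef
      ring
    calc Hfun n m (a•p+b•q) = linef n m j (a•p+b•q) := hEr
      _ = a * linef n m j p + b * linef n m j q := haff
      _ ≤ a * Hfun n m p + b * Hfun n m q := by
          have e1 := mul_le_mul_of_nonneg_left h1 ha
          have e2 := mul_le_mul_of_nonneg_left h2 hb
          linarith
      _ = a • Hfun n m p + b • Hfun n m q := by simp [smul_eq_mul]
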